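/- There exists an auxiliary random variable U such that H(Y|X,U) = 0, H(X|Y,U) = 0, and I(X,Y;U) ≤ H(X|Y) + H(Y|X). -/

import Mathlib

open scoped BigOperators Pointwise Classical

noncomputable section

namespace GW

/-- A probability mass function on a finite type. -/
def IsPMF {α : Type} [Fintype α] (p : α → ℝ) : Prop :=
  (∀ a, 0 ≤ p a) ∧ ∑ a, p a = 1

/-- Distribution (pmf) of the random variable `f` under the pmf `p`. -/
def dist {α β : Type} [Fintype α] (p : α → ℝ) (f : α → β) : β → ℝ :=
  fun b => ∑ a, if f a = b then p a else 0

/-- Shannon entropy (base 2) of the random variable `f` under the pmf `p`. -/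
def H {α β : Type} [Fintype α] [Fintype β] (p : α → ℝ) (f : α → β) : ℝ :=
  ∑ b, -(dist p f b * Real.logb 2 (dist p f b))

/-- Mutual information `I(f; g)` under `p`. -/
def I2 {α β γ : Type} [Fintype α] [Fintype β] [Fintype γ]
    (p : α → ℝ) (f : α → β) (g : α → γ) : ℝ :=
  H p f + H p g - H p (fun a => (f a, g a))

/-- Conditional entropy `H(f | g)` under `p`. -/
def Hc {α β γ : Type} [Fintype α] [Fintype β] [Fintype γ]
    (p : α → ℝ) (f : α → β) (g : α → γ) : ℝ :=
  H p (fun a => (f a, g a)) - H p g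

/-- Conditional mutual information `I(f; g | h)` under `p`. -/
def Ic {α β γ δ : Type} [Fintype α] [Fintype β] [Fintype γ] [Fintype δ]
    (p : α → ℝ) (f : α → β) (g : α → γ) (h : α → δ) : ℝ :=
  Hc p f h + Hc p g h - Hc p (fun a => (f a, g a)) h

/-- Independence of the random variables `f` and `g` under `p`. -/
def Indep {α β γ : Type} [Fintype α] (p : α → ℝ) (f : α → β) (g : α → γ) : Prop :=
  ∀ b c, dist p (fun a => (f a, g a)) (b, c) = dist p f b * dist p g c

/-- `q` is a joint pmf on `X × Y × U` whose `(X,Y)`-marginal is `p`; i.e. `U` is an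
auxiliary random variable defined jointly with `(X,Y)` via a conditional pmf `p_{U|XY}`. -/
def IsAux {X Y U : Type} [Fintype X] [Fintype Y] [Fintype U]
    (p : X × Y → ℝ) (q : X × Y × U → ℝ) : Prop :=
  IsPMF q ∧ ∀ x y, (∑ u, q (x, y, u)) = p (x, y)

/-- Coordinate map onto `X`. -/
def cX {X Y U : Type} : X × Y × U → X := fun a => a.1
/-- Coordinate map onto `Y`. -/
def cY {X Y U : Type} : X × Y × U → Y := fun a => a.2.1
/-- Coordinate map onto `U`. -/
def cU {X Y U : Type} : X × Y × U → U := fun a => a.2.2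
/-- Coordinate map onto `X × Y`. -/
def cXY {X Y U : Type} : X × Y × U → X × Y := fun a => (a.1, a.2.1)

/-- The mutual information region `𝓘_{XY}`. -/
def MIRegion {X Y : Type} [Fintype X] [Fintype Y] (p : X × Y → ℝ) : Set (ℝ × ℝ × ℝ) :=
  { v | ∃ (U : Type) (_ : Fintype U) (q : X × Y × U → ℝ), IsAux p q ∧
      v = (I2 q cX cU, I2 q cY cU, I2 q cXY cU) }

/-- The outer region `𝓘ᵒ_{XY}`. -/
def OuterRegion {X Y : Type} [Fintype X] [Fintype Y] (p : X × Y → ℝ) : Set (ℝ × ℝ × ℝ) :=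
  { v | 0 ≤ v.1 ∧ 0 ≤ v.2.1 ∧ v.1 + v.2.1 - v.2.2 ≤ I2 p Prod.fst Prod.snd ∧
        0 ≤ v.2.2 - v.2.1 ∧ v.2.2 - v.2.1 ≤ Hc p Prod.fst Prod.snd ∧
        0 ≤ v.2.2 - v.1 ∧ v.2.2 - v.1 ≤ Hc p Prod.snd Prod.fst }

/-- Maximal interaction information `G_NNI(X; Y)`. -/
def GNNI {X Y : Type} [Fintype X] [Fintype Y] (p : X × Y → ℝ) : ℝ :=
  sSup { r | ∃ (U : Type) (_ : Fintype U) (q : X × Y × U → ℝ), IsAux p q ∧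
      r = Ic q cX cY cU - I2 p Prod.fst Prod.snd }

/-- Asymmetric private interaction information `G_PNI(X → Y)`. -/
def GPNI {X Y : Type} [Fintype X] [Fintype Y] (p : X × Y → ℝ) : ℝ :=
  sSup { r | ∃ (U : Type) (_ : Fintype U) (q : X × Y × U → ℝ), IsAux p q ∧
      Indep q cU cX ∧ r = Ic q cX cY cU - I2 p Prod.fst Prod.snd }

/-- Symmetric private interaction information `G_PPI(X; Y)`. -/
def GPPI {X Y : Type} [Fintype X] [Fintype Y] (p : X × Y → ℝ) : ℝ :=
  sSup { r | ∃ (U : Type) (_ : Fintype U) (q : X × Y × U → ℝ), IsAux p q ∧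
      Indep q cU cX ∧ Indep q cU cY ∧ r = Ic q cX cY cU - I2 p Prod.fst Prod.snd }


section Stmt4Aux

variable {α β γ : Type} [Fintype α] [Fintype β] [Fintype γ]

/-- The function `t ↦ -t log₂ t`. -/
noncomputable def phi (t : ℝ) : ℝ := -(t * Real.logb 2 t)

lemma phi_zero : phi 0 = 0 := by simp [phi]

lemma phi_one : phi 1 = 0 := by simp [phi]

lemma phi_mul {s t : ℝ} (hs : 0 ≤ s) (ht : 0 ≤ t) :
    phi (s * t) = s * phi t + t * phi s := by
  rcases eq_or_lt_of_le hs with h | h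
  · simp [← h, phi]
  rcases eq_or_lt_of_le ht with h' | h'
  · simp [← h', phi]
  · unfold phi
    rw [Real.logb_mul h.ne' h'.ne']
    ring

lemma H_eq (p : α → ℝ) (f : α → β) : H p f = ∑ b, phi (dist p f b) := rfl

omit [Fintype β] in
lemma dist_nonneg' {p : α → ℝ} (hp : ∀ a, 0 ≤ p a) (f : α → β) (b : β) :
    0 ≤ dist p f b := by
  refine Finset.sum_nonneg fun a _ => ?_
  split
  · exact hp a
  · exact le_refl 0
set_option linter.unusedSectionVars false

lemma sum_dist (p : α → ℝ) (f : α → β) : ∑ b, dist p f b = ∑ a, p a := by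
  unfold dist
  rw [Finset.sum_comm]
  refine Finset.sum_congr rfl fun a _ => ?_
  simp

lemma H_comp_inj (p : α → ℝ) (f : α → β) (e : β → γ) (he : Function.Injective e) :
    H p (fun a => e (f a)) = H p f := by
  rw [H_eq, H_eq]
  have hvan : ∀ c ∉ Finset.univ.image e, phi (dist p (fun a => e (f a)) c) = 0 := by
    intro c hc
    have : dist p (fun a => e (f a)) c = 0 := by
      refine Finset.sum_eq_zero fun a _ => ?_
      have : e (f a) ≠ c := fun h => hc (Finset.mem_image.2 ⟨f a, Finset.mem_univ _, h⟩)
      simp [this]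
    rw [this, phi_zero]
  have h1 : ∑ c, phi (dist p (fun a => e (f a)) c)
      = ∑ c ∈ Finset.univ.image e, phi (dist p (fun a => e (f a)) c) :=
    (Finset.sum_subset (Finset.subset_univ _) fun c _ hc => hvan c hc).symm
  rw [h1, Finset.sum_image (fun x _ y _ h => he h)]
  refine Finset.sum_congr rfl fun b _ => ?_
  congr 1
  refine Finset.sum_congr rfl fun a _ => ?_
  simp [he.eq_iff]

lemma H_id (q : α → ℝ) : H q (fun a => a) = ∑ a, phi (q a) := by
  rw [H_eq]
  refine Finset.sum_congr rfl fun b _ => ?_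
  congr 1
  simp [dist]

lemma H_of_subsingleton [Subsingleton β] {p : α → ℝ} (hp : IsPMF p) (f : α → β) :
    H p f = 0 := by
  rw [H_eq]
  refine Finset.sum_eq_zero fun b _ => ?_
  have : dist p f b = 1 := by
    unfold dist
    rw [← hp.2]
    refine Finset.sum_congr rfl fun a _ => ?_
    simp [Subsingleton.elim (f a) b]
  rw [this, phi_one]

lemma H_of_det (p : α → ℝ) (f : α → β) (k : α → γ) (F : γ → β)
    (hd : ∀ a, p a ≠ 0 → f a = F (k a)) :
    H p (fun a => (f a, k a)) = H p k := by
  rw [H_eq, H_eq, Fintype.sum_prod_type, Finset.sum_comm]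
  refine Finset.sum_congr rfl fun c _ => ?_
  rw [Finset.sum_eq_single (F c)]
  · congr 1
    refine Finset.sum_congr rfl fun a _ => ?_
    by_cases hpa : p a = 0
    · simp [hpa]
    · by_cases hk : k a = c
      · simp [Prod.ext_iff, hk, hd a hpa]
      · simp [Prod.ext_iff, hk]
  · intro b _ hb
    have : dist p (fun a => (f a, k a)) (b, c) = 0 := by
      refine Finset.sum_eq_zero fun a _ => ?_
      by_cases hpa : p a = 0
      · simp [hpa]
      · have : (f a, k a) ≠ (b, c) := by
          intro h
          have h1 : f a = b := congrArg Prod.fst h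
          have h2 : k a = c := congrArg Prod.snd h
          exact hb (by rw [← h1, hd a hpa, h2])
        simp [this]
    rw [this, phi_zero]
  · simp
lemma dist_pair_fst (p : α → ℝ) (f : α → β) (g : α → γ) (b : β) :
    ∑ c, dist p (fun a => (f a, g a)) (b, c) = dist p f b := by
  unfold dist
  rw [Finset.sum_comm]
  refine Finset.sum_congr rfl fun a _ => ?_
  by_cases h : f a = b
  · subst h
    simp [Prod.ext_iff]
  · simp [Prod.ext_iff, h]

lemma dist_pair_snd (p : α → ℝ) (f : α → β) (g : α → γ) (c : γ) :
    ∑ b, dist p (fun a => (f a, g a)) (b, c) = dist p g c := by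
  unfold dist
  rw [Finset.sum_comm]
  refine Finset.sum_congr rfl fun a _ => ?_
  by_cases h : g a = c
  · subst h
    simp [Prod.ext_iff]
  · simp [Prod.ext_iff, h]

lemma H_pair_le {p : α → ℝ} (hp : IsPMF p) (f : α → β) (g : α → γ) :
    H p (fun a => (f a, g a)) ≤ H p f + H p g := by
  obtain ⟨hp0, hp1⟩ := hp
  set P := dist p (fun a => (f a, g a)) with hP
  have hPn : ∀ bc, 0 ≤ P bc := dist_nonneg' hp0 _
  have hPf : ∀ b, ∑ c, P (b, c) = dist p f b := dist_pair_fst p f g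
  have hPg : ∀ c, ∑ b, P (b, c) = dist p g c := dist_pair_snd p f g
  have hfn : ∀ b, 0 ≤ dist p f b := dist_nonneg' hp0 f
  have hgn : ∀ c, 0 ≤ dist p g c := dist_nonneg' hp0 g
  have hPlef : ∀ b c, P (b, c) ≤ dist p f b := by
    intro b c
    rw [← hPf b]
    exact Finset.single_le_sum (fun c' _ => hPn (b, c')) (Finset.mem_univ c)
  have hPleg : ∀ b c, P (b, c) ≤ dist p g c := by
    intro b c
    rw [← hPg c]
    exact Finset.single_le_sum (fun b' _ => hPn (b', c)) (Finset.mem_univ b)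
  have hsumP : ∑ bc : β × γ, P bc = 1 := by rw [hP, sum_dist, hp1]
  have hsumf : ∑ b, dist p f b = 1 := by rw [sum_dist, hp1]
  have hsumg : ∑ c, dist p g c = 1 := by rw [sum_dist, hp1]
  -- rewrite H p f and H p g as double sums
  have hHf : H p f = ∑ b, ∑ c, -(P (b, c) * Real.logb 2 (dist p f b)) := by
    rw [H_eq]
    refine Finset.sum_congr rfl fun b _ => ?_
    rw [phi, ← hPf b, Finset.sum_mul, ← Finset.sum_neg_distrib]
  have hHg : H p g = ∑ c, ∑ b, -(P (b, c) * Real.logb 2 (dist p g c)) := by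
    rw [H_eq]
    refine Finset.sum_congr rfl fun c _ => ?_
    rw [phi, ← hPg c, Finset.sum_mul, ← Finset.sum_neg_distrib]
  have hHp : H p (fun a => (f a, g a)) = ∑ b, ∑ c, phi (P (b, c)) := by
    rw [H_eq, ← hP, Fintype.sum_prod_type]
  have key : ∀ b c, (P (b, c) - dist p f b * dist p g c) / Real.log 2 ≤
      -(P (b, c) * Real.logb 2 (dist p f b)) + -(P (b, c) * Real.logb 2 (dist p g c))
        - phi (P (b, c)) := by
    intro b c
    rcases eq_or_lt_of_le (hPn (b, c)) with h0 | h0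
    · rw [← h0, phi_zero]
      simp only [zero_mul, neg_zero, add_zero, sub_zero, zero_sub]
      apply div_nonpos_of_nonpos_of_nonneg
      · simp only [zero_sub, neg_nonpos]
        exact mul_nonneg (hfn b) (hgn c)
      · exact Real.log_nonneg one_le_two
    · have hfb : 0 < dist p f b := lt_of_lt_of_le h0 (hPlef b c)
      have hgc : 0 < dist p g c := lt_of_lt_of_le h0 (hPleg b c)
      rw [phi]
      have hlog2 : 0 < Real.log 2 := Real.log_pos one_lt_two
      have hlb : Real.log ((dist p f b * dist p g c) / P (b, c)) ≤
          (dist p f b * dist p g c) / P (b, c) - 1 :=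
        Real.log_le_sub_one_of_pos (by positivity)
      have expand : -(P (b, c) * Real.logb 2 (dist p f b)) +
          -(P (b, c) * Real.logb 2 (dist p g c)) - -(P (b,c) * Real.logb 2 (P (b,c)))
          = -(P (b, c) * (Real.log ((dist p f b * dist p g c) / P (b, c)))) / Real.log 2 := by
        rw [Real.log_div (by positivity) h0.ne', Real.log_mul hfb.ne' hgc.ne']
        unfold Real.logb
        field_simp
        ring
      rw [expand]
      rw [div_le_div_iff_of_pos_right hlog2]
      have := mul_le_mul_of_nonneg_left hlb (le_of_lt h0)
      calc P (b, c) - dist p f b * dist p g c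
          = -(P (b,c) * ((dist p f b * dist p g c) / P (b, c) - 1)) := by
            field_simp
            ring
        _ ≤ -(P (b, c) * Real.log ((dist p f b * dist p g c) / P (b, c))) := by
            exact neg_le_neg this
  have hsum : ∑ b, ∑ c, (P (b, c) - dist p f b * dist p g c) / Real.log 2 = 0 := by
    simp only [div_eq_mul_inv, ← Finset.sum_mul]
    have h3 : ∑ b, ∑ c, P (b, c) = 1 := by rw [← Fintype.sum_prod_type]; exact hsumP
    have h2 : ∑ b, ∑ c, dist p f b * dist p g c = 1 := by
      rw [← Finset.sum_mul_sum, hsumf, hsumg, one_mul]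
    have h4 : ∑ b, ∑ c, (P (b, c) - dist p f b * dist p g c) = 0 := by
      simp only [Finset.sum_sub_distrib]
      rw [h3, h2, sub_self]
    rw [h4, zero_mul]
  have hmono : (0:ℝ) ≤ ∑ b, ∑ c, (-(P (b, c) * Real.logb 2 (dist p f b)) +
      -(P (b, c) * Real.logb 2 (dist p g c)) - phi (P (b, c))) := by
    rw [← hsum]
    exact Finset.sum_le_sum fun b _ => Finset.sum_le_sum fun c _ => key b c
  have hHg' : H p g = ∑ b, ∑ c, -(P (b, c) * Real.logb 2 (dist p g c)) :=
    hHg.trans Finset.sum_comm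
  have hR : ∑ b, ∑ c, (-(P (b, c) * Real.logb 2 (dist p f b)) +
      -(P (b, c) * Real.logb 2 (dist p g c)) - phi (P (b, c)))
      = H p f + H p g - H p (fun a => (f a, g a)) := by
    rw [hHf, hHg', hHp]
    simp only [Finset.sum_sub_distrib, Finset.sum_add_distrib]
  linarith [hR ▸ hmono]
lemma H_pi_le {ι κ : Type} [Fintype ι] [Fintype κ] {p : α → ℝ} (hp : IsPMF p)
    (F : α → ι → κ) : H p F ≤ ∑ i, H p (fun a => F a i) := by
  classical
  have main : ∀ s : Finset ι,
      H p (fun a => (fun i : {i // i ∈ s} => F a i.1)) ≤ ∑ i ∈ s, H p (fun a => F a i) := by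
    intro s
    induction s using Finset.induction_on with
    | empty =>
      haveI : IsEmpty {i // i ∈ (∅ : Finset ι)} := ⟨fun i => absurd i.2 (Finset.notMem_empty _)⟩
      rw [H_of_subsingleton hp]
      simp
    | @insert j s hj ih =>
      set e : κ × ({i // i ∈ s} → κ) → ({i // i ∈ insert j s} → κ) :=
        fun vw i => if h : i.1 = j then vw.1
          else vw.2 ⟨i.1, (Finset.mem_insert.1 i.2).resolve_left h⟩ with he_def
      have he : Function.Injective e := by
        rintro ⟨v, w⟩ ⟨v', w'⟩ h
        have hv : v = v' := by
          have := congrFun h ⟨j, Finset.mem_insert_self j s⟩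
          simpa [he_def] using this
        have hw : w = w' := by
          funext i
          have hij : (i.1 : ι) ≠ j := fun hh => hj (hh ▸ i.2)
          have := congrFun h ⟨i.1, Finset.mem_insert_of_mem i.2⟩
          simpa [he_def, hij] using this
        rw [hv, hw]
      have hcomp : (fun a => (fun i : {i // i ∈ insert j s} => F a i.1))
          = fun a => e (F a j, fun i : {i // i ∈ s} => F a i.1) := by
        funext a i
        by_cases h : (i.1 : ι) = j
        · simp [he_def, h]
        · simp [he_def, h]
      calc H p (fun a => (fun i : {i // i ∈ insert j s} => F a i.1))
          = H p (fun a => (F a j, fun i : {i // i ∈ s} => F a i.1)) := by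
            rw [hcomp]
            exact H_comp_inj p _ e he
        _ ≤ H p (fun a => F a j) + H p (fun a => (fun i : {i // i ∈ s} => F a i.1)) :=
            H_pair_le hp _ _
        _ ≤ H p (fun a => F a j) + ∑ i ∈ s, H p (fun a => F a i) := by linarith
        _ = ∑ i ∈ insert j s, H p (fun a => F a i) := by rw [Finset.sum_insert hj]
  have e2 : Function.Injective
      (fun (w : ι → κ) => (fun i : {i // i ∈ (Finset.univ : Finset ι)} => w i.1)) := by
    intro w w' h
    funext i
    exact congrFun h ⟨i, Finset.mem_univ i⟩
  calc H p F = H p (fun a => (fun i : {i // i ∈ (Finset.univ : Finset ι)} => F a i.1)) :=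
        (H_comp_inj p F _ e2).symm
    _ ≤ ∑ i ∈ Finset.univ, H p (fun a => F a i) := main Finset.univ
    _ = ∑ i, H p (fun a => F a i) := rfl
lemma phi_prod {ι : Type} (s : Finset ι) (t : ι → ℝ) (ht : ∀ i ∈ s, 0 ≤ t i) :
    phi (∏ i ∈ s, t i) = ∑ i ∈ s, (∏ j ∈ s.erase i, t j) * phi (t i) := by
  classical
  induction s using Finset.induction_on with
  | empty => simp [phi_one]
  | @insert j s hj ih =>
    have htj : 0 ≤ t j := ht j (Finset.mem_insert_self j s)
    have hts : ∀ i ∈ s, 0 ≤ t i := fun i hi => ht i (Finset.mem_insert_of_mem hi)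
    have hprod : 0 ≤ ∏ i ∈ s, t i := Finset.prod_nonneg hts
    rw [Finset.prod_insert hj, phi_mul htj hprod, ih hts, Finset.sum_insert hj,
      Finset.erase_insert hj, Finset.mul_sum]
    have : ∀ i ∈ s, t j * ((∏ j' ∈ s.erase i, t j') * phi (t i))
        = (∏ j' ∈ (insert j s).erase i, t j') * phi (t i) := by
      intro i hi
      have hij : i ≠ j := fun h => hj (h ▸ hi)
      rw [Finset.erase_insert_of_ne (Ne.symm hij),
        Finset.prod_insert (fun h => hj (Finset.mem_of_mem_erase h))]
      ring
    rw [Finset.sum_congr rfl this]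
    ring

lemma sum_fn_prod {ι κ : Type} [Fintype ι] [Fintype κ] (W : ι → κ → ℝ) :
    ∑ g : ι → κ, ∏ i, W i (g i) = ∏ i, ∑ k, W i k := (Fintype.prod_sum _).symm

lemma sum_fn_prod_one {ι κ : Type} [Fintype ι] [Fintype κ] (W : ι → κ → ℝ)
    (h1 : ∀ i, ∑ k, W i k = 1) : ∑ g : ι → κ, ∏ i, W i (g i) = 1 := by
  rw [sum_fn_prod]
  exact Finset.prod_eq_one fun i _ => h1 i

lemma ent_pi {ι κ : Type} [Fintype ι] [Fintype κ] (W : ι → κ → ℝ)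
    (h0 : ∀ i k, 0 ≤ W i k) (h1 : ∀ i, ∑ k, W i k = 1) :
    ∑ g : ι → κ, phi (∏ i, W i (g i)) = ∑ i, ∑ k, phi (W i k) := by
  classical
  have step1 : ∀ g : ι → κ, phi (∏ i, W i (g i))
      = ∑ i, (∏ j ∈ Finset.univ.erase i, W j (g j)) * phi (W i (g i)) :=
    fun g => phi_prod Finset.univ _ (fun i _ => h0 i (g i))
  rw [Finset.sum_congr rfl fun g _ => step1 g, Finset.sum_comm]
  refine Finset.sum_congr rfl fun i _ => ?_
  set V : ι → κ → ℝ := fun j k => if j = i then phi (W i k) else W j k with hV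
  have hterm : ∀ g : ι → κ, (∏ j ∈ Finset.univ.erase i, W j (g j)) * phi (W i (g i))
      = ∏ j, V j (g j) := by
    intro g
    rw [← Finset.mul_prod_erase Finset.univ (fun j => V j (g j)) (Finset.mem_univ i)]
    have h1' : V i (g i) = phi (W i (g i)) := by simp [hV]
    have h2' : ∏ j ∈ Finset.univ.erase i, V j (g j)
        = ∏ j ∈ Finset.univ.erase i, W j (g j) := by
      refine Finset.prod_congr rfl fun j hjmem => ?_
      have : j ≠ i := Finset.ne_of_mem_erase hjmem
      simp [hV, this]
    rw [h1', h2', mul_comm]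
  rw [Finset.sum_congr rfl fun g _ => hterm g, sum_fn_prod V]
  have hcol : ∀ j, ∑ k, V j k = if j = i then ∑ k, phi (W i k) else 1 := by
    intro j
    by_cases hj : j = i
    · simp [hV, hj]
    · simp [hV, hj, h1 j]
  rw [Finset.prod_congr rfl fun j _ => hcol j]
  simp

lemma sum_fn_eval {ι κ : Type} [Fintype ι] [Fintype κ] (W : ι → κ → ℝ)
    (h1 : ∀ i, ∑ k, W i k = 1) (i0 : ι) (k0 : κ) :
    ∑ g : ι → κ, (if g i0 = k0 then ∏ i, W i (g i) else 0) = W i0 k0 := by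
  classical
  set V : ι → κ → ℝ := fun i k => if i = i0 then (if k = k0 then W i k else 0) else W i k
    with hV
  have hterm : ∀ g : ι → κ, (if g i0 = k0 then ∏ i, W i (g i) else 0)
      = ∏ i, V i (g i) := by
    intro g
    by_cases h : g i0 = k0
    · rw [if_pos h]
      refine Finset.prod_congr rfl fun i _ => ?_
      by_cases hi : i = i0
      · subst hi; simp [hV, h]
      · simp [hV, hi]
    · rw [if_neg h]
      refine (Finset.prod_eq_zero (Finset.mem_univ i0) ?_).symm
      simp [hV, h]
  rw [Finset.sum_congr rfl fun g _ => hterm g, sum_fn_prod V]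
  have hcol : ∀ i, ∑ k, V i k = if i = i0 then W i0 k0 else 1 := by
    intro i
    by_cases hi : i = i0
    · subst hi; simp [hV]
    · simp [hV, hi, h1 i]
  rw [Finset.prod_congr rfl fun i _ => hcol i]
  simp
variable {X Y : Type} [Fintype X] [Fintype Y]

noncomputable def pXm (p : X × Y → ℝ) (x : X) : ℝ := ∑ y, p (x, y)
noncomputable def pYm (p : X × Y → ℝ) (y : Y) : ℝ := ∑ x, p (x, y)

noncomputable def cnd (p : X × Y → ℝ) (y0 : Y) (x : X) (y : Y) : ℝ :=
  if pXm p x = 0 then (if y = y0 then 1 else 0) else p (x, y) / pXm p x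

noncomputable def cnd' (p : X × Y → ℝ) (x0 : X) (y : Y) (x : X) : ℝ :=
  if pYm p y = 0 then (if x = x0 then 1 else 0) else p (x, y) / pYm p y

lemma pXm_nonneg {p : X × Y → ℝ} (hp0 : ∀ z, 0 ≤ p z) (x : X) : 0 ≤ pXm p x :=
  Finset.sum_nonneg fun y _ => hp0 (x, y)

lemma pYm_nonneg {p : X × Y → ℝ} (hp0 : ∀ z, 0 ≤ p z) (y : Y) : 0 ≤ pYm p y :=
  Finset.sum_nonneg fun x _ => hp0 (x, y)

lemma p_zero_of_pXm {p : X × Y → ℝ} (hp0 : ∀ z, 0 ≤ p z) {x : X} (h : pXm p x = 0)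
    (y : Y) : p (x, y) = 0 :=
  (Finset.sum_eq_zero_iff_of_nonneg fun y _ => hp0 (x, y)).1 h y (Finset.mem_univ y)

lemma p_zero_of_pYm {p : X × Y → ℝ} (hp0 : ∀ z, 0 ≤ p z) {y : Y} (h : pYm p y = 0)
    (x : X) : p (x, y) = 0 :=
  (Finset.sum_eq_zero_iff_of_nonneg fun x _ => hp0 (x, y)).1 h x (Finset.mem_univ x)

lemma cnd_nonneg {p : X × Y → ℝ} (hp0 : ∀ z, 0 ≤ p z) (y0 : Y) (x : X) (y : Y) :
    0 ≤ cnd p y0 x y := by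
  unfold cnd
  split
  · split <;> norm_num
  · exact div_nonneg (hp0 _) (pXm_nonneg hp0 x)

lemma cnd'_nonneg {p : X × Y → ℝ} (hp0 : ∀ z, 0 ≤ p z) (x0 : X) (y : Y) (x : X) :
    0 ≤ cnd' p x0 y x := by
  unfold cnd'
  split
  · split <;> norm_num
  · exact div_nonneg (hp0 _) (pYm_nonneg hp0 y)

lemma sum_cnd (p : X × Y → ℝ) (y0 : Y) (x : X) : ∑ y, cnd p y0 x y = 1 := by
  unfold cnd
  by_cases h : pXm p x = 0
  · simp [h]
  · simp only [if_neg h]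
    rw [← Finset.sum_div]
    exact div_self h

lemma sum_cnd' (p : X × Y → ℝ) (x0 : X) (y : Y) : ∑ x, cnd' p x0 y x = 1 := by
  unfold cnd'
  by_cases h : pYm p y = 0
  · simp [h]
  · simp only [if_neg h]
    rw [← Finset.sum_div]
    exact div_self h

lemma cnd_mul {p : X × Y → ℝ} {x : X} (h : pXm p x ≠ 0) (y0 : Y) (y : Y) :
    pXm p x * cnd p y0 x y = p (x, y) := by
  unfold cnd
  rw [if_neg h]
  field_simp

lemma cnd'_mul {p : X × Y → ℝ} {y : Y} (h : pYm p y ≠ 0) (x0 : X) (x : X) :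
    pYm p y * cnd' p x0 y x = p (x, y) := by
  unfold cnd'
  rw [if_neg h]
  field_simp

/-- Conditional entropies of the rows/columns. -/
noncomputable def ent1 (p : X × Y → ℝ) (y0 : Y) (x : X) : ℝ := ∑ y, phi (cnd p y0 x y)
noncomputable def ent2 (p : X × Y → ℝ) (x0 : X) (y : Y) : ℝ := ∑ x, phi (cnd' p x0 y x)

/-- Row of the conditional coupling kernel. -/
noncomputable def W1 (p : X × Y → ℝ) (y0 : Y) (x : X) (y : Y) : X → Y → ℝ :=
  fun x' y' => if x' = x then (if y' = y then 1 else 0) else cnd p y0 x' y'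

noncomputable def W2 (p : X × Y → ℝ) (x0 : X) (x : X) (y : Y) : Y → X → ℝ :=
  fun y' x' => if y' = y then (if x' = x then 1 else 0) else cnd' p x0 y' x'

lemma W1_nonneg {p : X × Y → ℝ} (hp0 : ∀ z, 0 ≤ p z) (y0 : Y) (x : X) (y : Y)
    (x' : X) (y' : Y) : 0 ≤ W1 p y0 x y x' y' := by
  unfold W1
  split
  · split <;> norm_num
  · exact cnd_nonneg hp0 y0 x' y'

lemma W2_nonneg {p : X × Y → ℝ} (hp0 : ∀ z, 0 ≤ p z) (x0 : X) (x : X) (y : Y)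
    (y' : Y) (x' : X) : 0 ≤ W2 p x0 x y y' x' := by
  unfold W2
  split
  · split <;> norm_num
  · exact cnd'_nonneg hp0 x0 y' x'

lemma W1_sum (p : X × Y → ℝ) (y0 : Y) (x : X) (y : Y) (x' : X) :
    ∑ y', W1 p y0 x y x' y' = 1 := by
  unfold W1
  by_cases h : x' = x
  · simp [h]
  · simp only [if_neg h]
    exact sum_cnd p y0 x'

lemma W2_sum (p : X × Y → ℝ) (x0 : X) (x : X) (y : Y) (y' : Y) :
    ∑ x', W2 p x0 x y y' x' = 1 := by
  unfold W2
  by_cases h : y' = y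
  · simp [h]
  · simp only [if_neg h]
    exact sum_cnd' p x0 y'

lemma sum_phi_W1 {p : X × Y → ℝ} (y0 : Y) (x : X) (y : Y) :
    ∑ x', ∑ y', phi (W1 p y0 x y x' y') = (∑ x', ent1 p y0 x') - ent1 p y0 x := by
  have hterm : ∀ x', ∑ y', phi (W1 p y0 x y x' y')
      = ent1 p y0 x' - (if x' = x then ent1 p y0 x' else 0) := by
    intro x'
    by_cases h : x' = x
    · subst h
      rw [if_pos rfl, sub_self]
      refine Finset.sum_eq_zero fun y' _ => ?_
      unfold W1
      rw [if_pos rfl]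
      by_cases hy : y' = y
      · rw [if_pos hy, phi_one]
      · rw [if_neg hy, phi_zero]
    · rw [if_neg h, sub_zero]
      unfold W1 ent1
      simp only [if_neg h]
  rw [Finset.sum_congr rfl fun x' _ => hterm x', Finset.sum_sub_distrib]
  congr 1
  rw [Finset.sum_ite_eq' Finset.univ x (fun x' => ent1 p y0 x')]
  simp

lemma sum_phi_W2 {p : X × Y → ℝ} (x0 : X) (x : X) (y : Y) :
    ∑ y', ∑ x', phi (W2 p x0 x y y' x') = (∑ y', ent2 p x0 y') - ent2 p x0 y := by
  have hterm : ∀ y', ∑ x', phi (W2 p x0 x y y' x')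
      = ent2 p x0 y' - (if y' = y then ent2 p x0 y' else 0) := by
    intro y'
    by_cases h : y' = y
    · subst h
      rw [if_pos rfl, sub_self]
      refine Finset.sum_eq_zero fun x' _ => ?_
      unfold W2
      rw [if_pos rfl]
      by_cases hx : x' = x
      · rw [if_pos hx, phi_one]
      · rw [if_neg hx, phi_zero]
    · rw [if_neg h, sub_zero]
      unfold W2 ent2
      simp only [if_neg h]
  rw [Finset.sum_congr rfl fun y' _ => hterm y', Finset.sum_sub_distrib]
  congr 1
  rw [Finset.sum_ite_eq' Finset.univ y (fun y' => ent2 p x0 y')]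
  simp

/-- The auxiliary coupling distribution. -/
noncomputable def AA (p : X × Y → ℝ) (y0 : Y) (x : X) (y : Y) (g : X → Y) : ℝ :=
  ∏ x', W1 p y0 x y x' (g x')

noncomputable def BB (p : X × Y → ℝ) (x0 : X) (x : X) (y : Y) (h : Y → X) : ℝ :=
  ∏ y', W2 p x0 x y y' (h y')

noncomputable def qq (p : X × Y → ℝ) (y0 : Y) (x0 : X) :
    X × Y × ((X → Y) × (Y → X)) → ℝ :=
  fun a => p (a.1, a.2.1) * (AA p y0 a.1 a.2.1 a.2.2.1 * BB p x0 a.1 a.2.1 a.2.2.2)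

lemma AA_nonneg {p : X × Y → ℝ} (hp0 : ∀ z, 0 ≤ p z) (y0 : Y) (x : X) (y : Y)
    (g : X → Y) : 0 ≤ AA p y0 x y g :=
  Finset.prod_nonneg fun x' _ => W1_nonneg hp0 y0 x y x' (g x')

lemma BB_nonneg {p : X × Y → ℝ} (hp0 : ∀ z, 0 ≤ p z) (x0 : X) (x : X) (y : Y)
    (h : Y → X) : 0 ≤ BB p x0 x y h :=
  Finset.prod_nonneg fun y' _ => W2_nonneg hp0 x0 x y y' (h y')

lemma sum_AA (p : X × Y → ℝ) (y0 : Y) (x : X) (y : Y) :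
    ∑ g : X → Y, AA p y0 x y g = 1 :=
  sum_fn_prod_one _ (W1_sum p y0 x y)

lemma sum_BB (p : X × Y → ℝ) (x0 : X) (x : X) (y : Y) :
    ∑ h : Y → X, BB p x0 x y h = 1 :=
  sum_fn_prod_one _ (W2_sum p x0 x y)

lemma ent_AA {p : X × Y → ℝ} (hp0 : ∀ z, 0 ≤ p z) (y0 : Y) (x : X) (y : Y) :
    ∑ g : X → Y, phi (AA p y0 x y g) = (∑ x', ent1 p y0 x') - ent1 p y0 x := by
  rw [show (∑ g : X → Y, phi (AA p y0 x y g))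
      = ∑ g : X → Y, phi (∏ x', W1 p y0 x y x' (g x')) from rfl]
  rw [ent_pi _ (fun x' y' => W1_nonneg hp0 y0 x y x' y') (W1_sum p y0 x y)]
  exact sum_phi_W1 y0 x y

lemma ent_BB {p : X × Y → ℝ} (hp0 : ∀ z, 0 ≤ p z) (x0 : X) (x : X) (y : Y) :
    ∑ h : Y → X, phi (BB p x0 x y h) = (∑ y', ent2 p x0 y') - ent2 p x0 y := by
  rw [show (∑ h : Y → X, phi (BB p x0 x y h))
      = ∑ h : Y → X, phi (∏ y', W2 p x0 x y y' (h y')) from rfl]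
  rw [ent_pi _ (fun y' x' => W2_nonneg hp0 x0 x y y' x') (W2_sum p x0 x y)]
  exact sum_phi_W2 x0 x y

lemma AA_eq_zero {p : X × Y → ℝ} (y0 : Y) {x : X} {y : Y} {g : X → Y}
    (h : g x ≠ y) : AA p y0 x y g = 0 := by
  refine Finset.prod_eq_zero (Finset.mem_univ x) ?_
  unfold W1
  rw [if_pos rfl, if_neg h]

lemma BB_eq_zero {p : X × Y → ℝ} (x0 : X) {x : X} {y : Y} {h : Y → X}
    (hh : h y ≠ x) : BB p x0 x y h = 0 := by
  refine Finset.prod_eq_zero (Finset.mem_univ y) ?_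
  unfold W2
  rw [if_pos rfl, if_neg hh]

lemma qq_nonneg {p : X × Y → ℝ} (hp0 : ∀ z, 0 ≤ p z) (y0 : Y) (x0 : X)
    (a : X × Y × ((X → Y) × (Y → X))) : 0 ≤ qq p y0 x0 a :=
  mul_nonneg (hp0 _) (mul_nonneg (AA_nonneg hp0 _ _ _ _) (BB_nonneg hp0 _ _ _ _))

lemma qq_marginal {p : X × Y → ℝ} (hp0 : ∀ z, 0 ≤ p z) (y0 : Y) (x0 : X)
    (x : X) (y : Y) : ∑ u : (X → Y) × (Y → X), qq p y0 x0 (x, y, u) = p (x, y) := by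
  unfold qq
  dsimp only
  rw [← Finset.mul_sum]
  rw [Fintype.sum_prod_type]
  have : ∑ g : X → Y, ∑ h : Y → X, AA p y0 x y g * BB p x0 x y h
      = (∑ g : X → Y, AA p y0 x y g) * (∑ h : Y → X, BB p x0 x y h) := by
    rw [Finset.sum_mul_sum]
  rw [this, sum_AA, sum_BB, one_mul, mul_one]
lemma sum_pair_ite (f : X × Y → ℝ) (z : X × Y) :
    ∑ x, ∑ y, (if (x, y) = z then f (x, y) else 0) = f z := by
  rw [← Fintype.sum_prod_type (f := fun w : X × Y => if w = z then f w else 0)]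
  rw [Finset.sum_ite_eq' Finset.univ z f]
  simp

lemma dist_cXY_eq {U : Type} [Fintype U] {p : X × Y → ℝ} {q : X × Y × U → ℝ}
    (hm : ∀ x y, ∑ u, q (x, y, u) = p (x, y)) (z : X × Y) :
    dist q cXY z = p z := by
  unfold dist cXY
  rw [Fintype.sum_prod_type]
  have inner : ∀ x : X, ∑ b : Y × U, (if ((x, b).1, (x, b).2.1) = z then q (x, b) else 0)
      = ∑ y, (if (x, y) = z then p (x, y) else 0) := by
    intro x
    rw [Fintype.sum_prod_type]
    refine Finset.sum_congr rfl fun y _ => ?_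
    dsimp only
    by_cases h : (x, y) = z
    · simp only [if_pos h]
      exact hm x y
    · simp [h]
  have hfin := (Finset.sum_congr rfl fun x _ => inner x).trans (sum_pair_ite p z)
  convert hfin using 5

lemma dist_fst_eq (p : X × Y → ℝ) (x : X) : dist p Prod.fst x = pXm p x := by
  unfold dist
  rw [Fintype.sum_prod_type]
  have inner : ∀ x'' : X, ∑ y, (if (x'', y).1 = x then p (x'', y) else 0)
      = if x'' = x then pXm p x'' else 0 := by
    intro x''
    by_cases h : x'' = x
    · simp only [h, if_pos rfl]
      exact Finset.sum_congr rfl fun y _ => by simp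
    · simp [h]
  rw [Finset.sum_congr rfl fun x'' _ => inner x'', Finset.sum_ite_eq' Finset.univ x (pXm p)]
  simp

lemma dist_snd_eq (p : X × Y → ℝ) (y : Y) : dist p Prod.snd y = pYm p y := by
  unfold dist
  rw [Fintype.sum_prod_type, Finset.sum_comm]
  have inner : ∀ y'' : Y, ∑ x, (if (x, y'').2 = y then p (x, y'') else 0)
      = if y'' = y then pYm p y'' else 0 := by
    intro y''
    by_cases h : y'' = y
    · simp only [h, if_pos rfl]
      exact Finset.sum_congr rfl fun x _ => by simp
    · simp [h]
  rw [Finset.sum_congr rfl fun y'' _ => inner y'', Finset.sum_ite_eq' Finset.univ y (pYm p)]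
  simp

lemma dist_coord_g {p : X × Y → ℝ} (hp : IsPMF p) (y0 : Y) (x0 : X) (x' : X) (y'' : Y) :
    dist (qq p y0 x0) (fun a => a.2.2.1 x') y'' = cnd p y0 x' y'' := by
  obtain ⟨hp0, hp1⟩ := hp
  unfold dist qq
  rw [Fintype.sum_prod_type]
  have step1 : ∀ x : X, ∑ b : Y × ((X → Y) × (Y → X)),
      (if (x, b).2.2.1 x' = y'' then
        p ((x, b).1, (x, b).2.1) *
          (AA p y0 (x, b).1 (x, b).2.1 (x, b).2.2.1 * BB p x0 (x, b).1 (x, b).2.1 (x, b).2.2.2)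
        else 0)
      = ∑ y, p (x, y) * W1 p y0 x y x' y'' := by
    intro x
    rw [Fintype.sum_prod_type]
    refine Finset.sum_congr rfl fun y _ => ?_
    rw [Fintype.sum_prod_type]
    have hin : ∀ g : X → Y, ∑ h : Y → X,
        (if (x, y, g, h).2.2.1 x' = y'' then
          p (x, y) * (AA p y0 x y g * BB p x0 x y h) else 0)
        = if g x' = y'' then p (x, y) * AA p y0 x y g else 0 := by
      intro g
      dsimp only
      by_cases hc : g x' = y''
      · simp only [if_pos hc]
        rw [← Finset.mul_sum, ← Finset.mul_sum, sum_BB, mul_one]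
      · simp [hc]
    rw [Finset.sum_congr rfl fun g _ => hin g]
    have : ∀ g : X → Y, (if g x' = y'' then p (x, y) * AA p y0 x y g else 0)
        = p (x, y) * (if g x' = y'' then AA p y0 x y g else 0) := by
      intro g
      by_cases hc : g x' = y'' <;> simp [hc]
    rw [Finset.sum_congr rfl fun g _ => this g, ← Finset.mul_sum]
    congr 1
    exact sum_fn_eval (W1 p y0 x y) (W1_sum p y0 x y) x' y''
  rw [Finset.sum_congr rfl fun x _ => step1 x]
  -- now `∑ x, ∑ y, p (x,y) * W1 p y0 x y x' y'' = cnd p y0 x' y''`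
  have hsplit : ∀ x y, p (x, y) * W1 p y0 x y x' y''
      = (if x' = x then p (x, y) * (if y'' = y then 1 else 0) - p (x, y) * cnd p y0 x' y''
          else 0) + p (x, y) * cnd p y0 x' y'' := by
    intro x y
    unfold W1
    by_cases h : x' = x
    · rw [if_pos h, if_pos h]; ring
    · rw [if_neg h, if_neg h]; ring
  rw [Finset.sum_congr rfl fun x _ => Finset.sum_congr rfl fun y _ => hsplit x y]
  simp only [Finset.sum_add_distrib]
  have h2 : ∑ x, ∑ y, p (x, y) * cnd p y0 x' y'' = cnd p y0 x' y'' := by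
    simp only [← Finset.sum_mul]
    rw [← Fintype.sum_prod_type (f := fun z : X × Y => p z)]
    · rw [hp1, one_mul]
  have h3 : ∑ x, ∑ y, (if x' = x then p (x, y) * (if y'' = y then 1 else 0)
      - p (x, y) * cnd p y0 x' y'' else 0)
      = p (x', y'') - pXm p x' * cnd p y0 x' y'' := by
    have hx : ∀ x : X, ∑ y, (if x' = x then p (x, y) * (if y'' = y then 1 else 0)
        - p (x, y) * cnd p y0 x' y'' else 0)
        = if x' = x then p (x, y'') - pXm p x * cnd p y0 x' y'' else 0 := by
      intro x
      by_cases h : x' = x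
      · simp only [if_pos h]
        rw [Finset.sum_sub_distrib]
        congr 1
        · have : ∀ y, p (x, y) * (if y'' = y then 1 else 0)
              = if y'' = y then p (x, y) else 0 := by
            intro y; by_cases hy : y'' = y <;> simp [hy]
          rw [Finset.sum_congr rfl fun y _ => this y,
            Finset.sum_ite_eq Finset.univ y'' (fun y => p (x, y))]
          simp [h]
        · rw [← Finset.sum_mul]
          rfl
      · simp [h]
    rw [Finset.sum_congr rfl fun x _ => hx x,
      Finset.sum_ite_eq Finset.univ x' (fun x => p (x, y'') - pXm p x * cnd p y0 x' y'')]
    simp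
  rw [h2, h3]
  by_cases h : pXm p x' = 0
  · rw [p_zero_of_pXm hp0 h y'', h]
    ring
  · rw [cnd_mul h y0 y'']
    ring
lemma dist_coord_h {p : X × Y → ℝ} (hp : IsPMF p) (y0 : Y) (x0 : X) (y' : Y) (x'' : X) :
    dist (qq p y0 x0) (fun a => a.2.2.2 y') x'' = cnd' p x0 y' x'' := by
  obtain ⟨hp0, hp1⟩ := hp
  unfold dist qq
  rw [Fintype.sum_prod_type]
  have step1 : ∀ x : X, ∑ b : Y × ((X → Y) × (Y → X)),
      (if (x, b).2.2.2 y' = x'' then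
        p ((x, b).1, (x, b).2.1) *
          (AA p y0 (x, b).1 (x, b).2.1 (x, b).2.2.1 * BB p x0 (x, b).1 (x, b).2.1 (x, b).2.2.2)
        else 0)
      = ∑ y, p (x, y) * W2 p x0 x y y' x'' := by
    intro x
    rw [Fintype.sum_prod_type]
    refine Finset.sum_congr rfl fun y _ => ?_
    rw [Fintype.sum_prod_type]
    have hin : ∀ g : X → Y, ∑ h : Y → X,
        (if (x, y, g, h).2.2.2 y' = x'' then
          p (x, y) * (AA p y0 x y g * BB p x0 x y h) else 0)
        = p (x, y) * AA p y0 x y g * W2 p x0 x y y' x'' := by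
      intro g
      dsimp only
      have : ∀ h : Y → X, (if h y' = x'' then p (x, y) * (AA p y0 x y g * BB p x0 x y h) else 0)
          = p (x, y) * AA p y0 x y g * (if h y' = x'' then BB p x0 x y h else 0) := by
        intro h
        by_cases hc : h y' = x'' <;> simp [hc] <;> ring
      rw [Finset.sum_congr rfl fun h _ => this h, ← Finset.mul_sum]
      congr 1
      exact sum_fn_eval (W2 p x0 x y) (W2_sum p x0 x y) y' x''
    rw [Finset.sum_congr rfl fun g _ => hin g]
    rw [← Finset.sum_mul]
    have : ∑ g : X → Y, p (x, y) * AA p y0 x y g = p (x, y) := by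
      rw [← Finset.mul_sum, sum_AA, mul_one]
    rw [this]
  rw [Finset.sum_congr rfl fun x _ => step1 x]
  -- now `∑ x, ∑ y, p (x,y) * W2 p x0 x y y' x'' = cnd' p x0 y' x''`
  have hsplit : ∀ x y, p (x, y) * W2 p x0 x y y' x''
      = (if y' = y then p (x, y) * (if x'' = x then 1 else 0) - p (x, y) * cnd' p x0 y' x''
          else 0) + p (x, y) * cnd' p x0 y' x'' := by
    intro x y
    unfold W2
    by_cases h : y' = y
    · rw [if_pos h, if_pos h]; ring
    · rw [if_neg h, if_neg h]; ring
  rw [Finset.sum_congr rfl fun x _ => Finset.sum_congr rfl fun y _ => hsplit x y]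
  simp only [Finset.sum_add_distrib]
  have h2 : ∑ x, ∑ y, p (x, y) * cnd' p x0 y' x'' = cnd' p x0 y' x'' := by
    simp only [← Finset.sum_mul]
    rw [← Fintype.sum_prod_type (f := fun z : X × Y => p z)]
    · rw [hp1, one_mul]
  have h3 : ∑ x, ∑ y, (if y' = y then p (x, y) * (if x'' = x then 1 else 0)
      - p (x, y) * cnd' p x0 y' x'' else 0)
      = p (x'', y') - pYm p y' * cnd' p x0 y' x'' := by
    rw [Finset.sum_comm]
    have hy : ∀ y : Y, ∑ x, (if y' = y then p (x, y) * (if x'' = x then 1 else 0)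
        - p (x, y) * cnd' p x0 y' x'' else 0)
        = if y' = y then p (x'', y) - pYm p y * cnd' p x0 y' x'' else 0 := by
      intro y
      by_cases h : y' = y
      · simp only [if_pos h]
        rw [Finset.sum_sub_distrib]
        congr 1
        · have : ∀ x, p (x, y) * (if x'' = x then 1 else 0)
              = if x'' = x then p (x, y) else 0 := by
            intro x; by_cases hx : x'' = x <;> simp [hx]
          rw [Finset.sum_congr rfl fun x _ => this x,
            Finset.sum_ite_eq Finset.univ x'' (fun x => p (x, y))]
          simp
        · rw [← Finset.sum_mul]
          rfl
      · simp [h]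
    rw [Finset.sum_congr rfl fun y _ => hy y,
      Finset.sum_ite_eq Finset.univ y' (fun y => p (x'', y) - pYm p y * cnd' p x0 y' x'')]
    simp
  rw [h2, h3]
  by_cases h : pYm p y' = 0
  · rw [p_zero_of_pYm hp0 h x'', h]
    ring
  · rw [cnd'_mul h x0 x'']
    ring
lemma ent_qq {p : X × Y → ℝ} (hp : IsPMF p) (y0 : Y) (x0 : X) :
    ∑ a : X × Y × ((X → Y) × (Y → X)), phi (qq p y0 x0 a)
      = (∑ z : X × Y, phi (p z))
        + ∑ z : X × Y, p z * (((∑ x', ent1 p y0 x') - ent1 p y0 z.1)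
            + ((∑ y', ent2 p x0 y') - ent2 p x0 z.2)) := by
  obtain ⟨hp0, hp1⟩ := hp
  have key : ∀ x y, ∑ u : (X → Y) × (Y → X), phi (qq p y0 x0 (x, y, u))
      = phi (p (x, y)) + p (x, y) * (((∑ x', ent1 p y0 x') - ent1 p y0 x)
          + ((∑ y', ent2 p x0 y') - ent2 p x0 y)) := by
    intro x y
    have t1 : ∀ u : (X → Y) × (Y → X), phi (qq p y0 x0 (x, y, u))
        = p (x, y) * phi (AA p y0 x y u.1 * BB p x0 x y u.2)
          + (AA p y0 x y u.1 * BB p x0 x y u.2) * phi (p (x, y)) := by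
      intro u
      exact phi_mul (hp0 (x, y))
        (mul_nonneg (AA_nonneg hp0 y0 x y u.1) (BB_nonneg hp0 x0 x y u.2))
    rw [Finset.sum_congr rfl fun u _ => t1 u, Finset.sum_add_distrib,
      ← Finset.mul_sum, ← Finset.sum_mul]
    have t2 : ∑ u : (X → Y) × (Y → X), AA p y0 x y u.1 * BB p x0 x y u.2 = 1 := by
      rw [Fintype.sum_prod_type]
      have : ∑ g : X → Y, ∑ h : Y → X, AA p y0 x y g * BB p x0 x y h
          = (∑ g : X → Y, AA p y0 x y g) * (∑ h : Y → X, BB p x0 x y h) := by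
        rw [Finset.sum_mul_sum]
      rw [this, sum_AA, sum_BB, one_mul]
    have t3 : ∑ u : (X → Y) × (Y → X), phi (AA p y0 x y u.1 * BB p x0 x y u.2)
        = ((∑ x', ent1 p y0 x') - ent1 p y0 x) + ((∑ y', ent2 p x0 y') - ent2 p x0 y) := by
      rw [Fintype.sum_prod_type]
      have hgh : ∀ g : X → Y, ∑ h : Y → X, phi (AA p y0 x y g * BB p x0 x y h)
          = AA p y0 x y g * ((∑ y', ent2 p x0 y') - ent2 p x0 y) + phi (AA p y0 x y g) := by
        intro g
        have : ∀ h : Y → X, phi (AA p y0 x y g * BB p x0 x y h)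
            = AA p y0 x y g * phi (BB p x0 x y h) + BB p x0 x y h * phi (AA p y0 x y g) :=
          fun h => phi_mul (AA_nonneg hp0 y0 x y g) (BB_nonneg hp0 x0 x y h)
        rw [Finset.sum_congr rfl fun h _ => this h, Finset.sum_add_distrib,
          ← Finset.mul_sum, ← Finset.sum_mul, ent_BB hp0, sum_BB, one_mul]
      rw [Finset.sum_congr rfl fun g _ => hgh g, Finset.sum_add_distrib,
        ← Finset.sum_mul, sum_AA, one_mul, ent_AA hp0]
      ring
    rw [t2, t3, one_mul]
    ring
  rw [Fintype.sum_prod_type]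
  have inner : ∀ x : X, ∑ b : Y × ((X → Y) × (Y → X)), phi (qq p y0 x0 (x, b))
      = ∑ y, (phi (p (x, y)) + p (x, y) * (((∑ x', ent1 p y0 x') - ent1 p y0 x)
          + ((∑ y', ent2 p x0 y') - ent2 p x0 y))) := by
    intro x
    rw [Fintype.sum_prod_type]
    exact Finset.sum_congr rfl fun y _ => key x y
  rw [Finset.sum_congr rfl fun x _ => inner x]
  simp only [Finset.sum_add_distrib]
  congr 1
  · exact (Fintype.sum_prod_type (f := fun z : X × Y => phi (p z))).symm
  · exact (Fintype.sum_prod_type (f := fun z : X × Y =>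
      p z * (((∑ x', ent1 p y0 x') - ent1 p y0 z.1)
        + ((∑ y', ent2 p x0 y') - ent2 p x0 z.2)))).symm

lemma claim1 {p : X × Y → ℝ} (hp : IsPMF p) (y0 : Y) :
    ∑ z : X × Y, p z * ent1 p y0 z.1
      = (∑ z : X × Y, phi (p z)) - ∑ x, phi (pXm p x) := by
  obtain ⟨hp0, hp1⟩ := hp
  rw [Fintype.sum_prod_type (f := fun z : X × Y => p z * ent1 p y0 z.1),
    Fintype.sum_prod_type (f := fun z : X × Y => phi (p z)), ← Finset.sum_sub_distrib]
  refine Finset.sum_congr rfl fun x _ => ?_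
  dsimp only
  rw [← Finset.sum_mul]
  by_cases h : pXm p x = 0
  · have hz : ∀ y, p (x, y) = 0 := p_zero_of_pXm hp0 h
    rw [show (∑ y, p (x, y)) = pXm p x from rfl, h, zero_mul]
    rw [Finset.sum_congr rfl fun y _ => (by rw [hz y, phi_zero] :
      phi (p (x, y)) = 0), Finset.sum_const]
    simp [phi_zero]
  · have hterm : ∀ y, phi (p (x, y))
        = pXm p x * phi (cnd p y0 x y) + cnd p y0 x y * phi (pXm p x) := by
      intro y
      rw [← cnd_mul h y0 y]
      exact phi_mul (pXm_nonneg hp0 x) (cnd_nonneg hp0 y0 x y)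
    rw [Finset.sum_congr rfl fun y _ => hterm y, Finset.sum_add_distrib,
      ← Finset.mul_sum, ← Finset.sum_mul, sum_cnd, one_mul]
    rw [show (∑ y, p (x, y)) = pXm p x from rfl]
    unfold ent1
    ring

lemma claim2 {p : X × Y → ℝ} (hp : IsPMF p) (x0 : X) :
    ∑ z : X × Y, p z * ent2 p x0 z.2
      = (∑ z : X × Y, phi (p z)) - ∑ y, phi (pYm p y) := by
  obtain ⟨hp0, hp1⟩ := hp
  rw [Fintype.sum_prod_type (f := fun z : X × Y => p z * ent2 p x0 z.2),
    Fintype.sum_prod_type (f := fun z : X × Y => phi (p z))]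
  rw [Finset.sum_comm (f := fun x y => p (x, y) * ent2 p x0 (x, y).2),
    Finset.sum_comm (f := fun x y => phi (p (x, y))), ← Finset.sum_sub_distrib]
  refine Finset.sum_congr rfl fun y _ => ?_
  dsimp only
  rw [← Finset.sum_mul]
  by_cases h : pYm p y = 0
  · have hz : ∀ x, p (x, y) = 0 := p_zero_of_pYm hp0 h
    rw [show (∑ x, p (x, y)) = pYm p y from rfl, h, zero_mul]
    rw [Finset.sum_congr rfl fun x _ => (by rw [hz x, phi_zero] :
      phi (p (x, y)) = 0), Finset.sum_const]
    simp [phi_zero]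
  · have hterm : ∀ x, phi (p (x, y))
        = pYm p y * phi (cnd' p x0 y x) + cnd' p x0 y x * phi (pYm p y) := by
      intro x
      rw [← cnd'_mul h x0 x]
      exact phi_mul (pYm_nonneg hp0 y) (cnd'_nonneg hp0 x0 y x)
    rw [Finset.sum_congr rfl fun x _ => hterm x, Finset.sum_add_distrib,
      ← Finset.mul_sum, ← Finset.sum_mul, sum_cnd', one_mul]
    rw [show (∑ x, p (x, y)) = pYm p y from rfl]
    unfold ent2
    ring

lemma qq_supp1 {p : X × Y → ℝ} (y0 : Y) (x0 : X) (a : X × Y × ((X → Y) × (Y → X)))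
    (h : qq p y0 x0 a ≠ 0) : a.2.2.1 a.1 = a.2.1 := by
  by_contra hc
  refine h ?_
  unfold qq
  rw [AA_eq_zero y0 hc]
  ring

lemma qq_supp2 {p : X × Y → ℝ} (y0 : Y) (x0 : X) (a : X × Y × ((X → Y) × (Y → X)))
    (h : qq p y0 x0 a ≠ 0) : a.2.2.2 a.2.1 = a.1 := by
  by_contra hc
  refine h ?_
  unfold qq
  rw [BB_eq_zero x0 hc]
  ring
end Stmt4Aux

/-- there is an auxiliary random variable `U` with `H(Y|X,U) = 0`,
`H(X|Y,U) = 0` and `I(X,Y;U) ≤ H(X|Y) + H(Y|X)`. -/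
theorem stmt4 {X Y : Type} [Fintype X] [Fintype Y] (p : X × Y → ℝ) (hp : IsPMF p) :
    ∃ (U : Type) (_ : Fintype U) (q : X × Y × U → ℝ), IsAux p q ∧
      Hc q cY (fun a => (cX a, cU a)) = 0 ∧
      Hc q cX (fun a => (cY a, cU a)) = 0 ∧
      I2 q cXY cU ≤ Hc p Prod.fst Prod.snd + Hc p Prod.snd Prod.fst := by
  obtain ⟨hp0, hp1⟩ := hp
  have hXY : Nonempty (X × Y) := by
    by_contra h
    haveI : IsEmpty (X × Y) := not_nonempty_iff.1 h
    rw [Finset.univ_eq_empty, Finset.sum_empty] at hp1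
    exact one_ne_zero hp1.symm
  obtain ⟨⟨x0, y0⟩⟩ := hXY
  have hqsum : ∑ a : X × Y × ((X → Y) × (Y → X)), qq p y0 x0 a = 1 := by
    rw [Fintype.sum_prod_type]
    have inner : ∀ x : X, ∑ b : Y × ((X → Y) × (Y → X)), qq p y0 x0 (x, b)
        = ∑ y, p (x, y) := by
      intro x
      rw [Fintype.sum_prod_type]
      exact Finset.sum_congr rfl fun y _ => qq_marginal hp0 y0 x0 x y
    rw [Finset.sum_congr rfl fun x _ => inner x]
    rw [← Fintype.sum_prod_type (f := fun z : X × Y => p z)]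
    exact hp1
  have hq : IsPMF (qq p y0 x0) := ⟨qq_nonneg hp0 y0 x0, hqsum⟩
  refine ⟨(X → Y) × (Y → X), inferInstance, qq p y0 x0,
    ⟨hq, fun x y => qq_marginal hp0 y0 x0 x y⟩, ?_, ?_, ?_⟩
  · unfold Hc
    rw [H_of_det (qq p y0 x0) cY (fun a => (cX a, cU a))
      (fun w : X × ((X → Y) × (Y → X)) => w.2.1 w.1)
      (fun a ha => (qq_supp1 y0 x0 a ha).symm), sub_self]
  · unfold Hc
    rw [H_of_det (qq p y0 x0) cX (fun a => (cY a, cU a))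
      (fun w : Y × ((X → Y) × (Y → X)) => w.2.2 w.1)
      (fun a ha => (qq_supp2 y0 x0 a ha).symm), sub_self]
  · unfold I2
    have hA : H (qq p y0 x0) cXY = ∑ z : X × Y, phi (p z) := by
      rw [H_eq]
      exact Finset.sum_congr rfl fun z _ => by
        rw [dist_cXY_eq (qq_marginal hp0 y0 x0) z]
    have injm : Function.Injective
        (fun a : X × Y × ((X → Y) × (Y → X)) => ((a.1, a.2.1), a.2.2)) := by
      intro a b h
      have h1 : a.1 = b.1 := congrArg (fun w => w.1.1) h
      have h2 : a.2.1 = b.2.1 := congrArg (fun w => w.1.2) h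
      have h3 : a.2.2 = b.2.2 := congrArg (fun w => w.2) h
      exact Prod.ext h1 (Prod.ext h2 h3)
    have hB : H (qq p y0 x0) (fun a => (cXY a, cU a))
        = ∑ a, phi (qq p y0 x0 a) := by
      have h1 : H (qq p y0 x0) (fun a => (cXY a, cU a))
          = H (qq p y0 x0) (fun a => a) :=
        H_comp_inj (qq p y0 x0) (fun a => a)
          (fun a : X × Y × ((X → Y) × (Y → X)) => ((a.1, a.2.1), a.2.2)) injm
      rw [h1, H_id]
    have hENT := ent_qq ⟨hp0, hp1⟩ y0 x0
    have hU : H (qq p y0 x0) cU ≤ (∑ x', ent1 p y0 x') + (∑ y', ent2 p x0 y') := by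
      have step1 : H (qq p y0 x0) cU
          ≤ H (qq p y0 x0) (fun a => a.2.2.1) + H (qq p y0 x0) (fun a => a.2.2.2) :=
        H_pair_le hq (fun a => a.2.2.1) (fun a => a.2.2.2)
      have step2 : H (qq p y0 x0) (fun a => a.2.2.1)
          ≤ ∑ x', H (qq p y0 x0) (fun a => a.2.2.1 x') := H_pi_le hq _
      have step3 : H (qq p y0 x0) (fun a => a.2.2.2)
          ≤ ∑ y', H (qq p y0 x0) (fun a => a.2.2.2 y') := H_pi_le hq _
      have e1 : ∀ x', H (qq p y0 x0) (fun a => a.2.2.1 x') = ent1 p y0 x' := by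
        intro x'
        rw [H_eq]
        exact Finset.sum_congr rfl fun y'' _ => by
          rw [dist_coord_g ⟨hp0, hp1⟩ y0 x0 x' y'']
      have e2 : ∀ y', H (qq p y0 x0) (fun a => a.2.2.2 y') = ent2 p x0 y' := by
        intro y'
        rw [H_eq]
        exact Finset.sum_congr rfl fun x'' _ => by
          rw [dist_coord_h ⟨hp0, hp1⟩ y0 x0 y' x'']
      rw [Finset.sum_congr rfl fun x' _ => e1 x'] at step2
      rw [Finset.sum_congr rfl fun y' _ => e2 y'] at step3
      linarith
    have hc1 := claim1 ⟨hp0, hp1⟩ y0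
    have hc2 := claim2 ⟨hp0, hp1⟩ x0
    have hfst : H p Prod.fst = ∑ x, phi (pXm p x) := by
      rw [H_eq]
      exact Finset.sum_congr rfl fun x _ => by rw [dist_fst_eq p x]
    have hsnd : H p Prod.snd = ∑ y, phi (pYm p y) := by
      rw [H_eq]
      exact Finset.sum_congr rfl fun y _ => by rw [dist_snd_eq p y]
    have hpair_id : H p (fun a : X × Y => (Prod.fst a, Prod.snd a))
        = ∑ z : X × Y, phi (p z) := H_id p
    have hswap : H p (fun a : X × Y => (Prod.snd a, Prod.fst a))
        = ∑ z : X × Y, phi (p z) := by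
      have h1 : H p (fun a : X × Y => (Prod.snd a, Prod.fst a)) = H p (fun a => a) :=
        H_comp_inj p (fun a => a) Prod.swap Prod.swap_injective
      rw [h1, H_id]
    have hsplit : ∑ z : X × Y, p z * (((∑ x', ent1 p y0 x') - ent1 p y0 z.1)
        + ((∑ y', ent2 p x0 y') - ent2 p x0 z.2))
        = (∑ x', ent1 p y0 x') + (∑ y', ent2 p x0 y')
          - (∑ z : X × Y, p z * ent1 p y0 z.1) - (∑ z : X × Y, p z * ent2 p x0 z.2) := by
      have hterm : ∀ z : X × Y, p z * (((∑ x', ent1 p y0 x') - ent1 p y0 z.1)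
          + ((∑ y', ent2 p x0 y') - ent2 p x0 z.2))
          = p z * ((∑ x', ent1 p y0 x') + (∑ y', ent2 p x0 y'))
            - p z * ent1 p y0 z.1 - p z * ent2 p x0 z.2 := by
        intro z; ring
      rw [Finset.sum_congr rfl fun z _ => hterm z]
      rw [Finset.sum_sub_distrib, Finset.sum_sub_distrib, ← Finset.sum_mul, hp1, one_mul]
    unfold Hc
    rw [hA, hB, hENT, hsplit, hpair_id, hswap, hfst, hsnd]
    linarith

end GW
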